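/- In a row pyramid of length ℓ, for any nontrivial partition removing w white and b black stones, w - b = 1 if and only if the partition is simple, and otherwise w - b ≥ 2. -/
import Mathlib


/-- A partition of a row pyramid of length `ℓ` (white stones `1..ℓ`, black stones
`1..ℓ-1`, black stone `i` under white stones `i` and `i+1`) is simple if the removed white
stones form one nonempty consecutive block and all forced black stones are removed. -/
def IsSimpleRowPartition (ℓ : ℕ) (Sw Sb : Finset ℕ) : Prop :=
  (∃ i w, 1 ≤ i ∧ 1 ≤ w ∧ Sw = Finset.Ico i (i + w)) ∧
  Sb = (Finset.Icc 1 (ℓ - 1)).filter (fun i => i ∈ Sw ∧ i + 1 ∈ Sw)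

/-- In a row pyramid of length `ℓ`, a nontrivial partition removing `w` white and `b`
black stones has `w - b = 1` if and only if it is simple; otherwise `w - b ≥ 2`. -/
theorem row_partition_simple_iff_diff_one (ℓ : ℕ) (Sw Sb : Finset ℕ)
    (hw : Sw ⊆ Finset.Icc 1 ℓ) (hb : Sb ⊆ Finset.Icc 1 (ℓ - 1))
    (hstable : ∀ i ∈ Sb, i ∈ Sw ∧ i + 1 ∈ Sw)
    (hnontrivial : Sw.Nonempty) :
    (Sw.card = Sb.card + 1 ↔ IsSimpleRowPartition ℓ Sw Sb) ∧
    (¬IsSimpleRowPartition ℓ Sw Sb → Sb.card + 2 ≤ Sw.card) := by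
  set E := Sw.filter (fun i => i + 1 ∈ Sw) with hE
  have hFE : (Finset.Icc 1 (ℓ - 1)).filter (fun i => i ∈ Sw ∧ i + 1 ∈ Sw) = E := by
    ext i
    simp only [hE, Finset.mem_filter, Finset.mem_Icc]
    constructor
    · rintro ⟨_, h1, h2⟩; exact ⟨h1, h2⟩
    · rintro ⟨h1, h2⟩
      have a1 := Finset.mem_Icc.mp (hw h1)
      have a2 := Finset.mem_Icc.mp (hw h2)
      exact ⟨⟨by omega, by omega⟩, h1, h2⟩
  set M := Sw.max' hnontrivial with hM
  set m := Sw.min' hnontrivial with hm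
  have hSbE : Sb ⊆ E := fun i hi => Finset.mem_filter.mpr ⟨(hstable i hi).1, (hstable i hi).2⟩
  have hEerase : E ⊆ Sw.erase M := by
    intro i hi
    rw [Finset.mem_filter] at hi
    have h1 := Finset.le_max' Sw (i + 1) hi.2
    exact Finset.mem_erase.mpr ⟨by omega, hi.1⟩
  have h2 := Finset.card_le_card hEerase
  have h3 : (Sw.erase M).card = Sw.card - 1 := Finset.card_erase_of_mem (Sw.max'_mem _)
  have h4 : 1 ≤ Sw.card := Finset.card_pos.mpr hnontrivial
  have h1 := Finset.card_le_card hSbE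
  have hsimple_card : IsSimpleRowPartition ℓ Sw Sb → Sw.card = Sb.card + 1 := by
    rintro ⟨⟨i, w, hi, hw1, hSw⟩, hSb⟩
    have hbe : Sb = E := by rw [hSb, hFE]
    rw [hbe]
    have hEeq : E = Finset.Ico i (i + w - 1) := by
      ext j
      simp only [hE, Finset.mem_filter, hSw, Finset.mem_Ico]
      omega
    rw [hSw, hEeq, Nat.card_Ico, Nat.card_Ico]
    omega
  have hcard_simple : Sw.card = Sb.card + 1 → IsSimpleRowPartition ℓ Sw Sb := by
    intro hc
    have hSbcard : Sb = E := Finset.eq_of_subset_of_card_le hSbE (by omega)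
    have hEeq : E = Sw.erase M := Finset.eq_of_subset_of_card_le hEerase (by omega)
    have hstep : ∀ x ∈ Sw, x ≠ M → x + 1 ∈ Sw := by
      intro x hx hxM
      have hxE : x ∈ E := hEeq ▸ Finset.mem_erase.mpr ⟨hxM, hx⟩
      exact (Finset.mem_filter.mp hxE).2
    have hind : ∀ k, m + k ≤ M → m + k ∈ Sw := by
      intro k
      induction k with
      | zero => intro _; rw [Nat.add_zero]; exact Sw.min'_mem hnontrivial
      | succ n ih =>
        intro h
        have hmem : m + n ∈ Sw := ih (by omega)
        have := hstep (m + n) hmem (by omega)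
        rw [Nat.add_succ]; exact this
    have hmM : m ≤ M := Sw.min'_le M (Sw.max'_mem _)
    have hSwI : Sw = Finset.Ico m (M + 1) := by
      ext x
      simp only [Finset.mem_Ico]
      constructor
      · intro hx
        exact ⟨Sw.min'_le x hx, by have := Finset.le_max' Sw x hx; omega⟩
      · intro hx
        have hmem := hind (x - m) (by omega)
        have hx' : m + (x - m) = x := by omega
        rwa [hx'] at hmem
    constructor
    · refine ⟨m, M + 1 - m, ?_, by omega, ?_⟩
      · have := Finset.mem_Icc.mp (hw (Sw.min'_mem hnontrivial))
        omega
      · rw [hSwI]; congr 1; omega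
    · rw [hFE, hSbcard]
  refine ⟨⟨hcard_simple, hsimple_card⟩, ?_⟩
  intro hns
  rcases Nat.lt_or_ge (Sb.card + 1) Sw.card with h | h
  · omega
  · exact absurd (hcard_simple (by omega)) hns
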